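/- For every real q with 1 < q < 2 and every x in [0,1], the function U(x) = 2^q·x + (1-x)^q - (1+x)^q is nonpositive. -/

import Mathlib

open Real Set

private lemma g_concave (q : ℝ) (hq1 : 1 < q) (hq2 : q < 2) :
    ConcaveOn ℝ (Icc (0:ℝ) 1) (fun t => (1 + t) ^ q - (1 - t) ^ q) := by
  have hq0 : (0:ℝ) < q := by linarith
  apply concaveOn_of_hasDerivWithinAt2_nonpos (f' := fun t =>
      q * (1 + t) ^ (q - 1) + q * (1 - t) ^ (q - 1))
    (f'' := fun t => (q * (q - 1)) * (1 + t) ^ (q - 2) - (q * (q - 1)) * (1 - t) ^ (q - 2))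
    (convex_Icc 0 1)
  · intro t _
    apply ContinuousWithinAt.sub
    · exact ((Real.continuousAt_rpow_const (1 + t) q (Or.inr hq0.le)).comp
        ((continuous_const.add continuous_id).continuousAt)).continuousWithinAt
    · exact ((Real.continuousAt_rpow_const (1 - t) q (Or.inr hq0.le)).comp
        ((continuous_const.sub continuous_id).continuousAt)).continuousWithinAt
  · intro x hx
    rw [interior_Icc] at hx
    have h1 : (0:ℝ) < 1 + x := by linarith [hx.1]
    have h2 : (0:ℝ) < 1 - x := by linarith [hx.2]
    have d1 : HasDerivAt (fun t : ℝ => (1 + t) ^ q) (q * (1 + x) ^ (q - 1)) x := by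
      have := (Real.hasDerivAt_rpow_const (x := 1 + x) (p := q) (Or.inl h1.ne')).comp x
        ((hasDerivAt_id x).const_add 1)
      simp at this; exact this
    have d2 : HasDerivAt (fun t : ℝ => (1 - t) ^ q) (-(q * (1 - x) ^ (q - 1))) x := by
      have := (Real.hasDerivAt_rpow_const (x := 1 - x) (p := q) (Or.inl h2.ne')).comp x
        ((hasDerivAt_id x).const_sub 1)
      simp at this; exact this
    have := (d1.sub d2)
    have h := this.hasDerivWithinAt (s := Ioo 0 1)
    simp [sub_neg_eq_add] at h; rw [interior_Icc]; exact h
  · intro x hx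
    rw [interior_Icc] at hx
    have h1 : (0:ℝ) < 1 + x := by linarith [hx.1]
    have h2 : (0:ℝ) < 1 - x := by linarith [hx.2]
    have d1 : HasDerivAt (fun t : ℝ => q * (1 + t) ^ (q - 1))
        (q * ((q - 1) * (1 + x) ^ (q - 2))) x := by
      have := ((Real.hasDerivAt_rpow_const (x := 1 + x) (p := q - 1) (Or.inl h1.ne')).comp x
        ((hasDerivAt_id x).const_add 1)).const_mul q
      simpa [show q - 1 - 1 = q - 2 by ring] using this
    have d2 : HasDerivAt (fun t : ℝ => q * (1 - t) ^ (q - 1))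
        (-(q * ((q - 1) * (1 - x) ^ (q - 2)))) x := by
      have := ((Real.hasDerivAt_rpow_const (x := 1 - x) (p := q - 1) (Or.inl h2.ne')).comp x
        ((hasDerivAt_id x).const_sub 1)).const_mul q
      simpa [show q - 1 - 1 = q - 2 by ring, mul_comm, mul_assoc, mul_left_comm] using this
    have := d1.add d2
    have heq : q * ((q - 1) * (1 + x) ^ (q - 2)) + -(q * ((q - 1) * (1 - x) ^ (q - 2)))
        = (q * (q - 1)) * (1 + x) ^ (q - 2) - (q * (q - 1)) * (1 - x) ^ (q - 2) := by ring
    rw [heq] at this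
    exact this.hasDerivWithinAt
  · intro x hx
    rw [interior_Icc] at hx
    have h1 : (0:ℝ) < 1 + x := by linarith [hx.1]
    have h2 : (0:ℝ) < 1 - x := by linarith [hx.2]
    have hle : (1 + x) ^ (q - 2) ≤ (1 - x) ^ (q - 2) :=
      Real.rpow_le_rpow_of_nonpos h2 (by linarith [hx.1]) (by linarith)
    have hpos : 0 < q * (q - 1) := by nlinarith
    nlinarith

theorem U_nonpos (q x : ℝ) (hq1 : 1 < q) (hq2 : q < 2) (hx0 : 0 ≤ x) (hx1 : x ≤ 1) :
    (2 : ℝ) ^ q * x + (1 - x) ^ q - (1 + x) ^ q ≤ 0 := by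
  have hcon := g_concave q hq1 hq2
  have h0 : (0:ℝ) ∈ Icc (0:ℝ) 1 := by constructor <;> norm_num
  have h1 : (1:ℝ) ∈ Icc (0:ℝ) 1 := by constructor <;> norm_num
  have key := hcon.2 h0 h1 (sub_nonneg.mpr hx1) hx0 (by ring : (1 - x) + x = 1)
  simp only [smul_eq_mul] at key
  have e0 : (1 + (0:ℝ)) ^ q - (1 - (0:ℝ)) ^ q = 0 := by norm_num
  have e1 : (1 + (1:ℝ)) ^ q - (1 - (1:ℝ)) ^ q = 2 ^ q := by
    norm_num [Real.zero_rpow (by positivity : q ≠ 0)]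
  have e2 : (1 - x) * 0 + x * 1 = x := by ring
  rw [show (1-x) * 0 + x * 1 = x by ring] at key
  simp only [e0, e1] at key
  -- key : (1-x)*0 + x*2^q ≤ (1+x)^q - (1-x)^q  (roughly)
  nlinarith [key]
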